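/- There is no connected graph G with -1 < λ_2(D(G)) < 1 - √3, where λ_2 denotes the second largest eigenvalue of the distance matrix of G. -/

import Mathlib

noncomputable def sortedEigenvalues {ι : Type*} [Fintype ι] [DecidableEq ι]
    (A : Matrix ι ι ℝ) (hA : A.IsHermitian) : List ℝ :=
  (Finset.univ.val.map hA.eigenvalues).sort (· ≤ ·)

/-- `eig A hA k` is the `k`-th largest eigenvalue of `A` (1-indexed). -/
noncomputable def eig {ι : Type*} [Fintype ι] [DecidableEq ι]
    (A : Matrix ι ι ℝ) (hA : A.IsHermitian) (k : ℕ) : ℝ :=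
  (sortedEigenvalues A hA)[Fintype.card ι - k]!

open Matrix Finset

variable {n : ℕ}



lemma parseval (b : OrthonormalBasis (Fin n) ℝ (EuclideanSpace ℝ (Fin n)))
    (x : EuclideanSpace ℝ (Fin n)) : ‖x‖ ^ 2 = ∑ i, (b.repr x i) ^ 2 := by
  rw [← real_inner_self_eq_norm_sq, ← b.repr.inner_map_map x x, PiLp.inner_apply]
  simp [sq]

lemma bridge {A : Matrix (Fin n) (Fin n) ℝ} (hA : A.IsHermitian)
    (x : EuclideanSpace ℝ (Fin n)) :
    ⇑x ⬝ᵥ (A *ᵥ ⇑x) = ∑ i, hA.eigenvalues i * (hA.eigenvectorBasis.repr x i) ^ 2 := by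
  set b := hA.eigenvectorBasis with hb
  have hx : (⇑x : Fin n → ℝ) = ∑ i, b.repr x i • ⇑(b i) := by
    conv_lhs => rw [show x = ∑ i, b.repr x i • b i from (b.sum_repr x).symm]
    simp
  have hy : A *ᵥ ⇑x = ∑ i, (hA.eigenvalues i * b.repr x i) • ⇑(b i) := by
    rw [hx, ← Matrix.mulVecLin_apply, map_sum]
    refine Finset.sum_congr rfl fun i _ => ?_
    rw [_root_.map_smul, Matrix.mulVecLin_apply, hA.mulVec_eigenvectorBasis]
    ext p
    simp [hb, mul_comm, mul_assoc, mul_left_comm]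
  have hrep : ∀ i, b.repr x i = ∑ p, ⇑(b i) p * ⇑x p := by
    intro i
    rw [b.repr_apply_apply, PiLp.inner_apply]
    simp [RCLike.inner_apply, mul_comm]
  rw [hy, dotProduct]
  simp only [Finset.sum_apply, Pi.smul_apply, smul_eq_mul, Finset.mul_sum]
  rw [Finset.sum_comm]
  refine Finset.sum_congr rfl fun i _ => ?_
  have h2 : ∑ p, ⇑x p * (hA.eigenvalues i * b.repr x i * ⇑(b i) p)
      = (hA.eigenvalues i * b.repr x i) * ∑ p, ⇑(b i) p * ⇑x p := by
    rw [Finset.mul_sum]; exact Finset.sum_congr rfl fun p _ => by ring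
  rw [h2, ← hrep i]; ring

lemma key_lt {A : Matrix (Fin n) (Fin n) ℝ} (hA : A.IsHermitian) {c : ℝ}
    (x : EuclideanSpace ℝ (Fin n))
    (hsupp : ∀ k, hA.eigenvectorBasis.repr x k ≠ 0 → c < hA.eigenvalues k)
    (j : Fin n) (hj : hA.eigenvectorBasis.repr x j ≠ 0) :
    c * ‖x‖ ^ 2 < ⇑x ⬝ᵥ (A *ᵥ ⇑x) := by
  rw [bridge hA x, parseval hA.eigenvectorBasis x, Finset.mul_sum]
  apply Finset.sum_lt_sum
  · intro k _
    by_cases hk : hA.eigenvectorBasis.repr x k = 0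
    · simp [hk]
    · exact mul_le_mul_of_nonneg_right (hsupp k hk).le (sq_nonneg _)
  · exact ⟨j, Finset.mem_univ j,
      mul_lt_mul_of_pos_right (hsupp j hj) (by positivity)⟩

lemma key_lt' {A : Matrix (Fin n) (Fin n) ℝ} (hA : A.IsHermitian) {c : ℝ}
    (x : EuclideanSpace ℝ (Fin n))
    (hsupp : ∀ k, hA.eigenvectorBasis.repr x k ≠ 0 → hA.eigenvalues k < c)
    (j : Fin n) (hj : hA.eigenvectorBasis.repr x j ≠ 0) :
    ⇑x ⬝ᵥ (A *ᵥ ⇑x) < c * ‖x‖ ^ 2 := by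
  rw [bridge hA x, parseval hA.eigenvectorBasis x, Finset.mul_sum]
  apply Finset.sum_lt_sum
  · intro k _
    by_cases hk : hA.eigenvectorBasis.repr x k = 0
    · simp [hk]
    · exact mul_le_mul_of_nonneg_right (hsupp k hk).le (sq_nonneg _)
  · exact ⟨j, Finset.mem_univ j,
      mul_lt_mul_of_pos_right (hsupp j hj) (by positivity)⟩
lemma count_ge_two {A : Matrix (Fin n) (Fin n) ℝ} (hA : A.IsHermitian) {c : ℝ}
    (v w : EuclideanSpace ℝ (Fin n)) (hv : v ≠ 0) (hw : w ≠ 0)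
    (hvw : (inner ℝ v w) = 0)
    (hQ : ∀ s t : ℝ, c * ‖s • v + t • w‖ ^ 2 ≤ ⇑(s • v + t • w) ⬝ᵥ (A *ᵥ ⇑(s • v + t • w))) :
    2 ≤ (Finset.univ.filter fun i => c ≤ hA.eigenvalues i).card := by
  by_contra hcard
  push_neg at hcard
  set b := hA.eigenvectorBasis with hb
  set S := Finset.univ.filter fun i => c ≤ hA.eigenvalues i with hS
  have hone : ∀ a ∈ S, ∀ a' ∈ S, a = a' := Finset.card_le_one.mp (by omega)
  -- choose s t
  obtain ⟨s, t, hst, hzero⟩ : ∃ s t : ℝ, ¬(s = 0 ∧ t = 0) ∧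
      ∀ i ∈ S, s * b.repr v i + t * b.repr w i = 0 := by
    by_cases hSe : S.Nonempty
    · obtain ⟨i0, hi0⟩ := hSe
      have hred : ∀ i ∈ S, i = i0 := fun i hi => hone i hi i0 hi0
      by_cases hrv : b.repr v i0 = 0
      · exact ⟨1, 0, by simp, fun i hi => by rw [hred i hi]; simp [hrv]⟩
      · exact ⟨b.repr w i0, -(b.repr v i0), by simp [hrv],
          fun i hi => by rw [hred i hi]; ring⟩
    · exact ⟨1, 0, by simp, fun i hi => absurd ⟨i, hi⟩ hSe⟩
  set x : EuclideanSpace ℝ (Fin n) := s • v + t • w with hx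
  have hrx : ∀ i, b.repr x i = s * b.repr v i + t * b.repr w i := by
    intro i
    rw [hx, map_add, _root_.map_smul, _root_.map_smul]
    simp [PiLp.add_apply, PiLp.smul_apply]
  have hxne : x ≠ 0 := by
    intro h0
    rcases not_and_or.mp hst with hs | ht
    · have hiv : (inner ℝ x v) = s * ‖v‖ ^ 2 := by
        rw [hx, inner_add_left, real_inner_smul_left, real_inner_smul_left,
          real_inner_self_eq_norm_sq, show (inner ℝ w v) = 0 from (real_inner_comm v w).trans hvw]
        ring
      rw [h0, inner_zero_left] at hiv
      have hvn : ‖v‖ ^ 2 ≠ 0 := pow_ne_zero 2 (norm_ne_zero_iff.mpr hv)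
      rcases mul_eq_zero.mp hiv.symm with h | h
      · exact hs h
      · exact hvn h
    · have hiw : (inner ℝ x w) = t * ‖w‖ ^ 2 := by
        rw [hx, inner_add_left, real_inner_smul_left, real_inner_smul_left,
          real_inner_self_eq_norm_sq, hvw]
        ring
      rw [h0, inner_zero_left] at hiw
      have hwn : ‖w‖ ^ 2 ≠ 0 := pow_ne_zero 2 (norm_ne_zero_iff.mpr hw)
      rcases mul_eq_zero.mp hiw.symm with h | h
      · exact ht h
      · exact hwn h
  obtain ⟨j, hj⟩ : ∃ j, b.repr x j ≠ 0 := by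
    by_contra hall
    push_neg at hall
    apply hxne
    have : b.repr x = 0 := by
      ext i; exact hall i
    simpa using b.repr.map_eq_zero_iff.mp this
  have hsupp : ∀ k, b.repr x k ≠ 0 → hA.eigenvalues k < c := by
    intro k hk
    by_contra hge
    push_neg at hge
    have hkS : k ∈ S := Finset.mem_filter.mpr ⟨Finset.mem_univ k, hge⟩
    exact hk (by rw [hrx k]; exact hzero k hkS)
  exact absurd (hQ s t) (not_le.mpr (key_lt' hA x hsupp j hj))
lemma count_le_one {A : Matrix (Fin n) (Fin n) ℝ} (hA : A.IsHermitian) {c : ℝ}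
    (φ : EuclideanSpace ℝ (Fin n) →ₗ[ℝ] ℝ)
    (hQ : ∀ x : EuclideanSpace ℝ (Fin n), φ x = 0 → ⇑x ⬝ᵥ (A *ᵥ ⇑x) ≤ c * ‖x‖ ^ 2) :
    (Finset.univ.filter fun i => c < hA.eigenvalues i).card ≤ 1 := by
  by_contra hcard
  push_neg at hcard
  set b := hA.eigenvectorBasis with hb
  obtain ⟨i, hi, j, hj, hij⟩ := Finset.one_lt_card.mp hcard
  rw [Finset.mem_filter] at hi hj
  -- build x supported on {i, j} with φ x = 0 and repr x ≠ 0 somewhere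
  by_cases hφi : φ (b i) = 0
  · -- x = b i
    have hsupp : ∀ k, b.repr (b i) k ≠ 0 → c < hA.eigenvalues k := by
      intro k hk
      have : b.repr (b i) k = if k = i then 1 else 0 := by
        rw [b.repr_self, EuclideanSpace.single_apply]
      rw [this] at hk
      by_cases h : k = i
      · exact h ▸ hi.2
      · simp [h] at hk
    have hji : b.repr (b i) i ≠ 0 := by
      rw [b.repr_self, EuclideanSpace.single_apply]; simp
    exact absurd (hQ (b i) hφi) (not_le.mpr (key_lt hA (b i) hsupp i hji))
  · set x : EuclideanSpace ℝ (Fin n) := φ (b i) • b j - φ (b j) • b i with hx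
    have hφx : φ x = 0 := by
      rw [hx, map_sub, _root_.map_smul, _root_.map_smul]
      simp [smul_eq_mul]
      ring
    have hrx : ∀ k, b.repr x k =
        φ (b i) * (if k = j then 1 else 0) - φ (b j) * (if k = i then 1 else 0) := by
      intro k
      rw [hx, map_sub, _root_.map_smul, _root_.map_smul, b.repr_self, b.repr_self]
      simp [EuclideanSpace.single_apply]
    have hsupp : ∀ k, b.repr x k ≠ 0 → c < hA.eigenvalues k := by
      intro k hk
      rw [hrx k] at hk
      by_cases h1 : k = j
      · exact h1 ▸ hj.2
      · by_cases h2 : k = i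
        · exact h2 ▸ hi.2
        · simp [h1, h2] at hk
    have hjx : b.repr x j ≠ 0 := by
      rw [hrx j]
      simp [hij.symm, hφi]
    exact absurd (hQ x hφx) (not_le.mpr (key_lt hA x hsupp j hjx))
section listfacts
variable {A : Matrix (Fin n) (Fin n) ℝ} (hA : A.IsHermitian)

lemma sorted_length : (sortedEigenvalues A hA).length = n := by
  simp [sortedEigenvalues]

lemma sorted_sorted : (sortedEigenvalues A hA).Pairwise (· ≤ ·) :=
  Multiset.pairwise_sort _ _

lemma sorted_countP (p : ℝ → Prop) [DecidablePred p] :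
    (sortedEigenvalues A hA).countP (fun x => decide (p x))
      = (Finset.univ.filter fun i => p (hA.eigenvalues i)).card := by
  have h1 : ((sortedEigenvalues A hA : List ℝ) : Multiset ℝ)
      = Finset.univ.val.map hA.eigenvalues := Multiset.sort_eq _ _
  have h2 : (sortedEigenvalues A hA).countP (fun x => decide (p x))
      = Multiset.countP p (Finset.univ.val.map hA.eigenvalues) := by
    rw [← h1, Multiset.coe_countP]
  rw [h2, Multiset.countP_map]
  rfl

lemma eig_eq (hn : 2 ≤ n) :
    ∀ h : n - 2 < (sortedEigenvalues A hA).length,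
    eig A hA 2 = (sortedEigenvalues A hA)[n-2]'h := by
  intro h
  rw [eig, Fintype.card_fin, getElem!_pos]

lemma le_eig_two (hn : 2 ≤ n) {c : ℝ}
    (h : 2 ≤ (Finset.univ.filter fun i => c ≤ hA.eigenvalues i).card) :
    c ≤ eig A hA 2 := by
  set l := sortedEigenvalues A hA with hL
  have hl : l.length = n := sorted_length hA
  have hidx : n - 2 < l.length := by omega
  rw [eig_eq hA hn hidx]
  have hcount : 2 ≤ l.countP (fun x => decide (c ≤ x)) := by
    rw [sorted_countP hA (fun x => c ≤ x)]; exact h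
  have hsplit : l.countP (fun x => decide (c ≤ x))
      = (l.take (n-1)).countP (fun x => decide (c ≤ x))
        + (l.drop (n-1)).countP (fun x => decide (c ≤ x)) := by
    conv_lhs => rw [← List.take_append_drop (n-1) l]
    rw [List.countP_append]
  have hdrop : (l.drop (n-1)).countP (fun x => decide (c ≤ x)) ≤ 1 := by
    calc (l.drop (n-1)).countP (fun x => decide (c ≤ x)) ≤ (l.drop (n-1)).length :=
          List.countP_le_length
      _ = l.length - (n-1) := List.length_drop
      _ ≤ 1 := by omega
  have htake : 0 < (l.take (n-1)).countP (fun x => decide (c ≤ x)) := by omega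
  obtain ⟨a, ha, hpa⟩ := List.countP_pos_iff.mp htake
  have hpa' : c ≤ a := of_decide_eq_true hpa
  obtain ⟨i, hi, heq⟩ := List.mem_iff_getElem.mp ha
  have hi' : i < n - 1 := by
    have h2 := hi
    rw [List.length_take, hl] at h2
    omega
  have hi2 : i < l.length := by omega
  have hgl : (l.take (n-1))[i]'hi = l[i]'hi2 := List.getElem_take
  have hle : l[i]'hi2 ≤ l[n-2]'hidx := by
    have := (sorted_sorted hA).rel_get_of_le (a := ⟨i, hi2⟩) (b := ⟨n-2, hidx⟩)
      (by simp [Fin.le_def]; omega)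
    simpa [List.get_eq_getElem] using this
  calc c ≤ a := hpa'
    _ = l[i]'hi2 := by rw [← heq, hgl]
    _ ≤ _ := hle

lemma eig_two_le (hn : 2 ≤ n) {c : ℝ}
    (h : (Finset.univ.filter fun i => c < hA.eigenvalues i).card ≤ 1) :
    eig A hA 2 ≤ c := by
  set l := sortedEigenvalues A hA with hL
  have hl : l.length = n := sorted_length hA
  have hidx : n - 2 < l.length := by omega
  have hidx1 : n - 1 < l.length := by omega
  rw [eig_eq hA hn hidx]
  by_contra hlt
  push_neg at hlt
  have hle2 : l[n-2]'hidx ≤ l[n-1]'hidx1 := by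
    have := (sorted_sorted hA).rel_get_of_le (a := ⟨n-2, hidx⟩) (b := ⟨n-1, hidx1⟩)
      (by simp [Fin.le_def]; omega)
    simpa [List.get_eq_getElem] using this
  have hcount : l.countP (fun x => decide (c < x))
      = (Finset.univ.filter fun i => c < hA.eigenvalues i).card :=
    sorted_countP hA (fun x => c < x)
  have key : ∀ (m : ℕ) (hm : m < l.length), n - 2 ≤ m → c < l[m]'hm := by
    intro m hm hm2
    refine lt_of_lt_of_le hlt ?_
    have := (sorted_sorted hA).rel_get_of_le (a := ⟨n-2, hidx⟩) (b := ⟨m, hm⟩)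
      (by simp [Fin.le_def]; omega)
    simpa [List.get_eq_getElem] using this
  have hdropeq : ∀ a ∈ l.drop (n-2), c < a := by
    intro a ha
    obtain ⟨i, hi, heq⟩ := List.mem_iff_getElem.mp ha
    have hilen : i < 2 := by
      have h2 := hi
      rw [List.length_drop, hl] at h2
      omega
    have hi2 : n - 2 + i < l.length := by omega
    have hgd : (l.drop (n-2))[i]'hi = l[n-2+i]'hi2 := List.getElem_drop
    rw [← heq, hgd]
    exact key _ _ (by omega)
  have hdrop2 : (l.drop (n-2)).countP (fun x => decide (c < x)) = 2 := by
    rw [List.countP_eq_length.mpr (fun a ha => decide_eq_true (hdropeq a ha))]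
    rw [List.length_drop]; omega
  have hsplit : l.countP (fun x => decide (c < x))
      = (l.take (n-2)).countP (fun x => decide (c < x))
        + (l.drop (n-2)).countP (fun x => decide (c < x)) := by
    conv_lhs => rw [← List.take_append_drop (n-2) l]
    rw [List.countP_append]
  omega

end listfacts

noncomputable def sumF : EuclideanSpace ℝ (Fin n) →ₗ[ℝ] ℝ where
  toFun x := ∑ i, x i
  map_add' x y := by simp [Finset.sum_add_distrib]
  map_smul' c x := by simp [Finset.mul_sum]

lemma norm_sq_eq (x : EuclideanSpace ℝ (Fin n)) : ‖x‖ ^ 2 = ∑ i, (x i) ^ 2 := by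
  rw [← real_inner_self_eq_norm_sq, PiLp.inner_apply]
  simp [sq]

lemma complete_quad {A : Matrix (Fin n) (Fin n) ℝ}
    (hA : ∀ p q : Fin n, A p q = if p = q then 0 else 1)
    (x : EuclideanSpace ℝ (Fin n)) (hx : sumF x = 0) :
    ⇑x ⬝ᵥ (A *ᵥ ⇑x) ≤ (-1) * ‖x‖ ^ 2 := by
  have hnorm : ‖x‖ ^ 2 = ∑ i, (⇑x i) ^ 2 := norm_sq_eq x
  have hsum : ∑ q, ⇑x q = 0 := hx
  have hmv : ∀ p, (A *ᵥ ⇑x) p = - (⇑x p) := by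
    intro p
    rw [mulVec, dotProduct]
    have h1 : ∀ q ∈ Finset.univ, A p q * ⇑x q = ⇑x q - (if p = q then ⇑x q else 0) := by
      intro q _
      rw [hA p q]
      by_cases h : p = q <;> simp [h]
    rw [Finset.sum_congr rfl h1, Finset.sum_sub_distrib, hsum, Finset.sum_ite_eq]
    simp
  have h2 : ⇑x ⬝ᵥ (A *ᵥ ⇑x) = ∑ p, ⇑x p * (- ⇑x p) := by
    rw [dotProduct]
    exact Finset.sum_congr rfl fun p _ => by rw [hmv p]
  rw [h2, hnorm, neg_one_mul, ← Finset.sum_neg_distrib]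
  exact le_of_eq (Finset.sum_congr rfl fun p _ => by ring)

lemma tri_sum {i j k : Fin n} (hij : i ≠ j) (hik : i ≠ k) (hjk : j ≠ k)
    (f : Fin n → ℝ) (h0 : ∀ p, p ≠ i → p ≠ j → p ≠ k → f p = 0) :
    ∑ p, f p = f i + f j + f k := by
  have h1 : ∑ p ∈ ({i, j, k} : Finset (Fin n)), f p = ∑ p, f p := by
    apply Finset.sum_subset (Finset.subset_univ _)
    intro p _ hp
    simp only [Finset.mem_insert, Finset.mem_singleton, not_or] at hp
    exact h0 p hp.1 hp.2.1 hp.2.2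
  rw [← h1]
  rw [Finset.sum_insert (by simp [hij, hik]), Finset.sum_insert (by simp [hjk]),
    Finset.sum_singleton, add_assoc]

lemma norm_sq_eq' (x : EuclideanSpace ℝ (Fin n)) : ‖x‖ ^ 2 = ∑ i, (x i) ^ 2 := by
  rw [← real_inner_self_eq_norm_sq, PiLp.inner_apply]
  simp [sq]

set_option maxHeartbeats 1000000 in
lemma p3_count {A : Matrix (Fin n) (Fin n) ℝ} (hA : A.IsHermitian)
    (i j k : Fin n) (hij : i ≠ j) (hik : i ≠ k) (hjk : j ≠ k)
    (hAii : A i i = 0) (hAjj : A j j = 0) (hAkk : A k k = 0)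
    (hAij : A i j = 1) (hAji : A j i = 1) (hAjk : A j k = 1) (hAkj : A k j = 1)
    (hAik : A i k = 2) (hAki : A k i = 2) :
    2 ≤ (Finset.univ.filter fun p => (1 - Real.sqrt 3) ≤ hA.eigenvalues p).card := by
  set r := Real.sqrt 3 with hr
  have hr2 : r ^ 2 = 3 := Real.sq_sqrt (by norm_num)
  have hr0 : 0 ≤ r := Real.sqrt_nonneg 3
  set vf : Fin n → ℝ := fun p => if p = i then (1+r) else if p = j then 2
    else if p = k then (1+r) else 0 with hvf
  set wf : Fin n → ℝ := fun p => if p = i then (1-r) else if p = j then 2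
    else if p = k then (1-r) else 0 with hwf
  have hvi : vf i = 1 + r := by simp [hvf]
  have hvj : vf j = 2 := by simp [hvf, hij.symm]
  have hvk : vf k = 1 + r := by simp [hvf, hik.symm, hjk.symm]
  have hwi : wf i = 1 - r := by simp [hwf]
  have hwj : wf j = 2 := by simp [hwf, hij.symm]
  have hwk : wf k = 1 - r := by simp [hwf, hik.symm, hjk.symm]
  have hv0 : ∀ p, p ≠ i → p ≠ j → p ≠ k → vf p = 0 := by
    intro p h1 h2 h3; simp [hvf, h1, h2, h3]
  have hw0 : ∀ p, p ≠ i → p ≠ j → p ≠ k → wf p = 0 := by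
    intro p h1 h2 h3; simp [hwf, h1, h2, h3]
  let v : EuclideanSpace ℝ (Fin n) := WithLp.toLp 2 vf
  let w : EuclideanSpace ℝ (Fin n) := WithLp.toLp 2 wf
  apply count_ge_two hA v w
  · intro h0
    have h2 : vf j = 0 := congrArg (fun x : EuclideanSpace ℝ (Fin n) => x j) h0
    rw [hvj] at h2; norm_num at h2
  · intro h0
    have h2 : wf j = 0 := congrArg (fun x : EuclideanSpace ℝ (Fin n) => x j) h0
    rw [hwj] at h2; norm_num at h2
  · have h1 : (inner ℝ v w)
        = ∑ p, vf p * wf p := by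
      rw [PiLp.inner_apply]
      exact Finset.sum_congr rfl fun p _ => by
        simp only [RCLike.inner_apply, conj_trivial]
        exact mul_comm _ _
    rw [h1, tri_sum hij hik hjk _ (fun p hpi hpj hpk => by
      rw [hv0 p hpi hpj hpk]; ring)]
    rw [hvi, hvj, hvk, hwi, hwj, hwk]
    nlinarith [hr2]
  · intro s t
    set xf : Fin n → ℝ := fun p => s * vf p + t * wf p with hxf
    show (1 - r) * ‖s • v + t • w‖ ^ 2
      ≤ xf ⬝ᵥ (A *ᵥ xf)
    have hx0 : ∀ p, p ≠ i → p ≠ j → p ≠ k → xf p = 0 := by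
      intro p h1 h2 h3
      rw [hxf]; simp only []
      rw [hv0 p h1 h2 h3, hw0 p h1 h2 h3]; ring
    have hxi : xf i = s * (1+r) + t * (1-r) := by rw [hxf]; simp only []; rw [hvi, hwi]
    have hxj : xf j = 2 * (s + t) := by rw [hxf]; simp only []; rw [hvj, hwj]; ring
    have hxk : xf k = s * (1+r) + t * (1-r) := by rw [hxf]; simp only []; rw [hvk, hwk]
    have hnorm : ‖s • v + t • w‖ ^ 2
        = ∑ p, xf p ^ 2 := norm_sq_eq' _
    have hnorm2 : ∑ p, xf p ^ 2 = 2 * (s * (1+r) + t * (1-r))^2 + (2*(s+t))^2 := by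
      rw [tri_sum hij hik hjk _ (fun p h1 h2 h3 => by rw [hx0 p h1 h2 h3]; ring)]
      rw [hxi, hxj, hxk]; ring
    have hmv : ∀ p, (A *ᵥ xf) p = A p i * xf i + A p j * xf j + A p k * xf k := by
      intro p
      rw [mulVec, dotProduct]
      exact tri_sum hij hik hjk _ (fun q h1 h2 h3 => by rw [hx0 q h1 h2 h3]; ring)
    have hdot : xf ⬝ᵥ (A *ᵥ xf)
        = xf i * (A *ᵥ xf) i + xf j * (A *ᵥ xf) j + xf k * (A *ᵥ xf) k := by
      rw [dotProduct]
      exact tri_sum hij hik hjk _ (fun q h1 h2 h3 => by rw [hx0 q h1 h2 h3]; ring)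
    rw [hdot, hnorm, hnorm2, hmv i, hmv j, hmv k, hxi, hxj, hxk,
      hAii, hAjj, hAkk, hAij, hAji, hAjk, hAkj, hAik, hAki]
    have key : ((s * (1 + r) + t * (1 - r)) *
          (0 * (s * (1 + r) + t * (1 - r)) + 1 * (2 * (s + t)) + 2 * (s * (1 + r) + t * (1 - r))) +
        2 * (s + t) * (1 * (s * (1 + r) + t * (1 - r)) + 0 * (2 * (s + t)) + 1 * (s * (1 + r) + t * (1 - r))) +
      (s * (1 + r) + t * (1 - r)) *
        (2 * (s * (1 + r) + t * (1 - r)) + 1 * (2 * (s + t)) + 0 * (s * (1 + r) + t * (1 - r))))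
        - (1 - r) * (2 * (s * (1 + r) + t * (1 - r)) ^ 2 + (2 * (s + t)) ^ 2)
        = 24 * (1 + r) * s ^ 2 := by
      linear_combination (4*(s+t)*(s-t) + 2*(s-t)^2 + 2*r*(s-t)^2) * hr2
    nlinarith [key, mul_nonneg (mul_nonneg (by norm_num : (0:ℝ) ≤ 24)
      (by linarith : (0:ℝ) ≤ 1 + r)) (sq_nonneg s)]

lemma exists_P3 {G : SimpleGraph (Fin n)} (hG : G.Connected)
    (hnc : ¬ ∀ u v : Fin n, u ≠ v → G.Adj u v) :
    ∃ i j k : Fin n, G.Adj i j ∧ G.Adj j k ∧ ¬ G.Adj i k ∧ i ≠ k ∧ G.dist i k = 2 := by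
  push_neg at hnc
  obtain ⟨u, v, huv, hnadj⟩ := hnc
  obtain ⟨p, hp⟩ := (hG.preconnected u v).exists_walk_length_eq_dist
  have hd2 : 2 ≤ G.dist u v := by
    have h0 : G.dist u v ≠ 0 := by
      rw [Ne, hG.dist_eq_zero_iff]; exact huv
    have h1 : G.dist u v ≠ 1 := by
      rw [Ne, SimpleGraph.dist_eq_one_iff_adj]; exact hnadj
    omega
  cases p with
  | nil => simp at hp; omega
  | @cons _ b _ h q =>
    cases q with
    | nil => simp at hp; omega
    | @cons _ c _ h' r =>
      have hlen : r.length + 2 = G.dist u v := by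
        simpa [SimpleGraph.Walk.length_cons] using hp
      have huc : u ≠ c := by
        intro heq
        subst heq
        have := SimpleGraph.dist_le r
        omega
      have hnuc : ¬ G.Adj u c := by
        intro hadj
        have := SimpleGraph.dist_le (SimpleGraph.Walk.cons hadj r)
        simp [SimpleGraph.Walk.length_cons] at this
        omega
      have hduc : G.dist u c = 2 := by
        have hle : G.dist u c ≤ 2 := by
          have := SimpleGraph.dist_le
            (SimpleGraph.Walk.cons h (SimpleGraph.Walk.cons h' SimpleGraph.Walk.nil))
          simpa using this
        have h0 : G.dist u c ≠ 0 := by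
          rw [Ne, hG.dist_eq_zero_iff]; exact huc
        have h1 : G.dist u c ≠ 1 := by
          rw [Ne, SimpleGraph.dist_eq_one_iff_adj]; exact hnuc
        omega
      exact ⟨u, b, c, h, h', hnuc, huc, hduc⟩

theorem no_graph_with_second_eigenvalue_in_gap {n : ℕ} (hn : 2 ≤ n)
    (G : SimpleGraph (Fin n)) (hG : G.Connected)
    (hD : (Matrix.of fun i j => (G.dist i j : ℝ)).IsHermitian) :
    ¬ (-1 < eig _ hD 2 ∧ eig _ hD 2 < 1 - Real.sqrt 3) := by
  rintro ⟨h1, h2⟩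
  by_cases hc : ∀ u v : Fin n, u ≠ v → G.Adj u v
  · have hent : ∀ p q : Fin n, (Matrix.of fun i j => (G.dist i j : ℝ)) p q
        = if p = q then 0 else 1 := by
      intro p q
      by_cases h : p = q
      · simp [Matrix.of_apply, h, SimpleGraph.dist_self]
      · have hd : G.dist p q = 1 := SimpleGraph.dist_eq_one_iff_adj.mpr (hc p q h)
        simp [Matrix.of_apply, h, hd]
    have hcount := count_le_one hD sumF (fun x hx => complete_quad hent x hx)
    have hle := eig_two_le hD hn (c := -1) hcount
    linarith
  · obtain ⟨i, j, k, hij, hjk, hnik, hik, hdik⟩ := exists_P3 hG hc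
    have ent : ∀ p q : Fin n, (Matrix.of fun i j => (G.dist i j : ℝ)) p q
        = (G.dist p q : ℝ) := fun p q => rfl
    have hAii : (Matrix.of fun i j => (G.dist i j : ℝ)) i i = 0 := by
      rw [ent]; simp [SimpleGraph.dist_self]
    have hAjj : (Matrix.of fun i j => (G.dist i j : ℝ)) j j = 0 := by
      rw [ent]; simp [SimpleGraph.dist_self]
    have hAkk : (Matrix.of fun i j => (G.dist i j : ℝ)) k k = 0 := by
      rw [ent]; simp [SimpleGraph.dist_self]
    have hAij : (Matrix.of fun i j => (G.dist i j : ℝ)) i j = 1 := by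
      rw [ent, SimpleGraph.dist_eq_one_iff_adj.mpr hij]; norm_num
    have hAji : (Matrix.of fun i j => (G.dist i j : ℝ)) j i = 1 := by
      rw [ent, SimpleGraph.dist_eq_one_iff_adj.mpr hij.symm]; norm_num
    have hAjk : (Matrix.of fun i j => (G.dist i j : ℝ)) j k = 1 := by
      rw [ent, SimpleGraph.dist_eq_one_iff_adj.mpr hjk]; norm_num
    have hAkj : (Matrix.of fun i j => (G.dist i j : ℝ)) k j = 1 := by
      rw [ent, SimpleGraph.dist_eq_one_iff_adj.mpr hjk.symm]; norm_num
    have hAik : (Matrix.of fun i j => (G.dist i j : ℝ)) i k = 2 := by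
      rw [ent, hdik]; norm_num
    have hAki : (Matrix.of fun i j => (G.dist i j : ℝ)) k i = 2 := by
      rw [ent, SimpleGraph.dist_comm, hdik]; norm_num
    have hcount := p3_count hD i j k (G.ne_of_adj hij) hik (G.ne_of_adj hjk)
      hAii hAjj hAkk hAij hAji hAjk hAkj hAik hAki
    have hge := le_eig_two hD hn hcount
    linarith
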